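/- The fast subsystem of the proportional block has a unique nonnegative equilibrium: for constants r·s·e⁺ ≥ 0, r·s·e⁻ ≥ 0, s > 0, q > 0, the system of equations r·s·e⁺ − s·p⁺ − q·p⁺·p⁻ = 0 and r·s·e⁻ − s·p⁻ − q·p⁺·p⁻ = 0 has exactly one solution (p⁺, p⁻) with p⁺ ≥ 0 and p⁻ ≥ 0. -/
import Mathlib

lemma prop_block_uniq_aux (s q a b p1 z1 p2 z2 : ℝ)
    (hs : 0 < s) (hq : 0 < q)
    (hp1 : 0 ≤ p1) (hz1 : 0 ≤ z1) (hp2 : 0 ≤ p2) (hz2 : 0 ≤ z2)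
    (e1 : a - s * p1 - q * p1 * z1 = 0) (e2 : b - s * z1 - q * p1 * z1 = 0)
    (e1' : a - s * p2 - q * p2 * z2 = 0) (e2' : b - s * z2 - q * p2 * z2 = 0) :
    p1 = p2 ∧ z1 = z2 := by
  have hpeq : p1 = p2 := by
    rcases lt_trichotomy p1 p2 with h | h | h
    · exfalso
      have h1 : p2 * z2 < p1 * z1 := by nlinarith
      have h2 : z1 < z2 := by nlinarith
      nlinarith [mul_le_mul_of_nonneg_right h.le hz1, mul_le_mul_of_nonneg_left h2.le hp2]
    · exact h
    · exfalso
      have h1 : p1 * z1 < p2 * z2 := by nlinarith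
      have h2 : z2 < z1 := by nlinarith
      nlinarith [mul_le_mul_of_nonneg_right h.le hz2, mul_le_mul_of_nonneg_left h2.le hp1]
  refine ⟨hpeq, ?_⟩
  subst hpeq
  have hpos : 0 < s + q * p1 := by nlinarith
  nlinarith

/-- The fast subsystem of the proportional block has a unique nonnegative equilibrium. -/
theorem proportional_block_unique_equilibrium
    (r s q ep em : ℝ)
    (hr : 0 ≤ r) (hs : 0 < s) (hq : 0 < q) (hep : 0 ≤ ep) (hem : 0 ≤ em) :
    ∃! p : ℝ × ℝ, 0 ≤ p.1 ∧ 0 ≤ p.2 ∧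
      r * s * ep - s * p.1 - q * p.1 * p.2 = 0 ∧
      r * s * em - s * p.2 - q * p.1 * p.2 = 0 := by
  set d : ℝ := r * (ep - em) with hd
  set S : ℝ := Real.sqrt ((s - q*d)^2 + 4*q*(r*s*ep)) with hS
  have ha : 0 ≤ r * s * ep := mul_nonneg (mul_nonneg hr hs.le) hep
  have hb : 0 ≤ r * s * em := mul_nonneg (mul_nonneg hr hs.le) hem
  have hS2 : S^2 = (s - q*d)^2 + 4*q*(r*s*ep) := by
    apply Real.sq_sqrt; nlinarith
  have hS2' : S^2 = (s + q*d)^2 + 4*q*(r*s*em) := by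
    rw [hS2, hd]; ring
  have hSnn : 0 ≤ S := Real.sqrt_nonneg _
  have hS1 : s - q*d ≤ S := by nlinarith
  have hS2le : s + q*d ≤ S := by nlinarith
  clear_value S
  clear hS
  set p2 : ℝ := (S - (s - q*d))/(2*q) with hp2def
  set z2 : ℝ := (S - (s + q*d))/(2*q) with hz2def
  have hp2 : 2*q*p2 = S - (s - q*d) := by
    rw [hp2def]; field_simp
  have hz2 : 2*q*z2 = S - (s + q*d) := by
    rw [hz2def]; field_simp
  clear_value p2 z2
  clear hp2def hz2def
  have hp0 : 0 ≤ p2 := by nlinarith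
  have hz0 : 0 ≤ z2 := by nlinarith
  have he1' : r * s * ep - s * p2 - q * p2 * z2 = 0 := by nlinarith [hS2, hp2, hz2]
  have he2' : r * s * em - s * z2 - q * p2 * z2 = 0 := by nlinarith [hS2', hp2, hz2]
  refine ⟨(p2, z2), ⟨hp0, hz0, he1', he2'⟩, ?_⟩
  rintro ⟨p1, z1⟩ ⟨hp1, hz1, he1, he2⟩
  obtain ⟨h1, h2⟩ := prop_block_uniq_aux s q (r*s*ep) (r*s*em) p1 z1 p2 z2
    hs hq hp1 hz1 hp0 hz0 he1 he2 he1' he2'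
  simp [Prod.ext_iff, h1, h2]
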